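/- Let m, b, k : ℝ with 0 < m, 0 < b, 0 < k, and let X : ℝ → ℝ solve the damped oscillator equation with forcing 0, i.e., X is twice differentiable and m * deriv (deriv X) t + b * deriv X t + k * X t = 0 for all t : ℝ. Then Filter.Tendsto X Filter.atTop (nhds 0) and Filter.Tendsto (deriv X) Filter.atTop (nhds 0). -/

import Mathlib

open Filter Real

/-- `X` solves the damped oscillator equation `m ẍ + b ẋ + k x = g` with forcing `g`:
`X` is twice differentiable and the equation holds at every time `t`. -/
def SolvesDampedOsc (m b k : ℝ) (g : ℝ → ℝ) (X : ℝ → ℝ) : Prop :=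
  Differentiable ℝ X ∧ Differentiable ℝ (deriv X) ∧
    ∀ t : ℝ, m * deriv (deriv X) t + b * deriv X t + k * X t = g t

private lemma aux_key (m b k ε c x v : ℝ) (hm : 0 < m) (hk : 0 < k) (hε0 : 0 < ε)
    (hε1 : ε * m ≤ m / 2) (hε2 : ε * m ≤ b / 2) (hε3 : ε * b ^ 2 ≤ k * b / 2)
    (hε4 : ε * m ≤ k / 2) (hc0 : 0 ≤ c) (hc1 : c * m ≤ b / 4) (hc2 : c * k ≤ ε * k / 2) :
    -(b - ε*m)*v^2 - ε*b*(x*v) - ε*k*x^2 + c*(m/2*v^2 + k/2*x^2 + ε*m*(x*v)) ≤ 0 := by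
  have hup : ε*m*(x*v) ≤ m/4*v^2 + k/4*x^2 := by
    nlinarith [mul_nonneg (mul_pos hε0 hm).le (sq_nonneg (x - v)),
      mul_le_mul_of_nonneg_right hε1 (sq_nonneg v),
      mul_le_mul_of_nonneg_right hε4 (sq_nonneg x)]
  have hcW : c * (m/2*v^2 + k/2*x^2 + ε*m*(x*v)) ≤ b/4*v^2 + ε*k/2*x^2 := by
    have hWle : m/2*v^2 + k/2*x^2 + ε*m*(x*v) ≤ m*v^2 + k*x^2 := by nlinarith [hup]
    calc c * (m/2*v^2 + k/2*x^2 + ε*m*(x*v)) ≤ c * (m*v^2 + k*x^2) :=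
          mul_le_mul_of_nonneg_left hWle hc0
      _ ≤ b/4*v^2 + ε*k/2*x^2 := by
          nlinarith [mul_le_mul_of_nonneg_right hc1 (sq_nonneg v),
            mul_le_mul_of_nonneg_right hc2 (sq_nonneg x)]
  have hmain : b/4*v^2 + ε*k/2*x^2 ≤ (b - ε*m)*v^2 + ε*b*(x*v) + ε*k*x^2 := by
    have h2k : (0:ℝ) < 2*k := by positivity
    rw [← mul_le_mul_iff_right₀ h2k]
    nlinarith [mul_nonneg hε0.le (sq_nonneg (b*v + k*x)),
      mul_le_mul_of_nonneg_right hε2 (mul_nonneg hk.le (sq_nonneg v)),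
      mul_le_mul_of_nonneg_right hε3 (sq_nonneg v)]
  linarith

private lemma aux_lb (m k ε x v : ℝ) (hm : 0 < m) (hε0 : 0 < ε)
    (hε1 : ε * m ≤ m / 2) (hε4 : ε * m ≤ k / 2) :
    m/4*v^2 + k/4*x^2 ≤ m/2*v^2 + k/2*x^2 + ε*m*(x*v) := by
  nlinarith [mul_nonneg (mul_pos hε0 hm).le (sq_nonneg (x + v)),
    mul_le_mul_of_nonneg_right hε1 (sq_nonneg v),
    mul_le_mul_of_nonneg_right hε4 (sq_nonneg x)]

/-- The homogeneous (transient) solution of the damped oscillator decays to zero,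
together with its derivative. -/
theorem damped_osc_homogeneous_decay (m b k : ℝ) (hm : 0 < m) (hb : 0 < b) (hk : 0 < k)
    (X : ℝ → ℝ) (hX : SolvesDampedOsc m b k (fun _ => 0) X) :
    Tendsto X atTop (nhds 0) ∧ Tendsto (deriv X) atTop (nhds 0) := by
  obtain ⟨hX1, hX2, heq⟩ := hX
  set v : ℝ → ℝ := deriv X with hv_def
  -- choose a small coupling parameter ε and decay rate c
  set ε : ℝ := min (1/2) (min (b/(2*m)) (min (k/(2*b)) (k/(2*m)))) with hε_def
  have hε0 : 0 < ε := by
    simp only [hε_def, lt_min_iff]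
    refine ⟨by norm_num, by positivity, by positivity, by positivity⟩
  have hε_half : ε ≤ 1/2 := min_le_left _ _
  have hε1 : ε * m ≤ m / 2 := by
    nlinarith [hm.le]
  have hε2 : ε * m ≤ b / 2 := by
    have : ε ≤ b/(2*m) := le_trans (min_le_right _ _) (min_le_left _ _)
    rw [le_div_iff₀ (by positivity)] at this; linarith
  have hε3 : ε * b ^ 2 ≤ k * b / 2 := by
    have : ε ≤ k/(2*b) := le_trans (min_le_right _ _)
      (le_trans (min_le_right _ _) (min_le_left _ _))
    rw [le_div_iff₀ (by positivity)] at this; nlinarith [hb.le]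
  have hε4 : ε * m ≤ k / 2 := by
    have : ε ≤ k/(2*m) := le_trans (min_le_right _ _)
      (le_trans (min_le_right _ _) (min_le_right _ _))
    rw [le_div_iff₀ (by positivity)] at this; linarith
  set c : ℝ := min (b/(4*m)) (ε/2) with hc_def
  have hc0 : 0 < c := by
    simp only [hc_def, lt_min_iff]; exact ⟨by positivity, by positivity⟩
  have hc1 : c * m ≤ b / 4 := by
    have : c ≤ b/(4*m) := min_le_left _ _
    rw [le_div_iff₀ (by positivity)] at this; linarith
  have hc2 : c * k ≤ ε * k / 2 := by
    have : c ≤ ε/2 := min_le_right _ _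
    nlinarith [hk.le]
  clear hε_def hc_def
  clear_value ε c
  -- the Lyapunov function
  set W : ℝ → ℝ := fun t => m/2 * (v t)^2 + k/2 * (X t)^2 + ε*m*(X t * v t) with hW_def
  have hxd : ∀ t, HasDerivAt X (v t) t := fun t => (hX1 t).hasDerivAt
  have hvd : ∀ t, HasDerivAt v (deriv v t) t := fun t => (hX2 t).hasDerivAt
  have hma : ∀ t, m * deriv v t = -(b * v t) - k * X t := by
    intro t; have := heq t; simp only at this; linarith
  -- derivative of W
  have hWd : ∀ t, HasDerivAt W
      (-(b - ε*m)*(v t)^2 - ε*b*(X t * v t) - ε*k*(X t)^2) t := by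
    intro t
    have h1 : HasDerivAt (fun t => (v t)^2) (2 * v t ^ 1 * deriv v t) t := (hvd t).pow 2
    have h2 : HasDerivAt (fun t => (X t)^2) (2 * X t ^ 1 * v t) t := (hxd t).pow 2
    have h3 : HasDerivAt (fun t => X t * v t) (v t * v t + X t * deriv v t) t :=
      (hxd t).mul (hvd t)
    have h := ((h1.const_mul (m/2)).add (h2.const_mul (k/2))).add (h3.const_mul (ε*m))
    refine h.congr_deriv (Eq.symm ?_)
    linear_combination (-(v t) - ε * X t) * (hma t)
  -- the key differential inequality: W' + c W ≤ 0
  have key : ∀ t, (-(b - ε*m)*(v t)^2 - ε*b*(X t * v t) - ε*k*(X t)^2) + c * W t ≤ 0 := by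
    intro t
    simp only [hW_def]
    have := aux_key m b k ε c (X t) (v t) hm hk hε0 hε1 hε2 hε3 hε4 hc0.le hc1 hc2
    linarith
  -- lower bound for W
  have hWlb : ∀ t, m/4*(v t)^2 + k/4*(X t)^2 ≤ W t := by
    intro t
    simp only [hW_def]
    exact aux_lb m k ε (X t) (v t) hm hε0 hε1 hε4
  clear hW_def hv_def heq hma hxd hvd hX1 hX2
  clear_value v W
  -- the rescaled Lyapunov function is antitone
  set F : ℝ → ℝ := fun t => W t * Real.exp (c*t) with hF_def
  have hFd : ∀ t, HasDerivAt F
      ((-(b - ε*m)*(v t)^2 - ε*b*(X t * v t) - ε*k*(X t)^2) * Real.exp (c*t)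
        + W t * (Real.exp (c*t) * (c*1))) t :=
    fun t => (hWd t).mul (((hasDerivAt_id t).const_mul c).exp)
  have hFanti : Antitone F := by
    refine antitone_of_deriv_nonpos (fun t => (hFd t).differentiableAt) (fun t => ?_)
    rw [(hFd t).deriv]
    have h1 := mul_nonpos_of_nonpos_of_nonneg (key t) (Real.exp_pos (c*t)).le
    nlinarith [h1]
  -- exponential decay of W
  have hbound : ∀ t, 0 ≤ t → W t ≤ W 0 * Real.exp (-(c*t)) := by
    intro t ht
    have h2 : W t * Real.exp (c*t) ≤ W 0 := by
      have := hFanti ht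
      simpa [hF_def] using this
    calc W t = (W t * Real.exp (c*t)) * Real.exp (-(c*t)) := by
          rw [mul_assoc, ← Real.exp_add]; simp
      _ ≤ W 0 * Real.exp (-(c*t)) :=
        mul_le_mul_of_nonneg_right h2 (Real.exp_pos _).le
  -- the decaying majorant tends to 0
  have hexp : Tendsto (fun t => W 0 * Real.exp (-(c*t))) atTop (nhds 0) := by
    have h1 : Tendsto (fun t : ℝ => c*t) atTop atTop :=
      Tendsto.const_mul_atTop hc0 tendsto_id
    have h2 : Tendsto (fun t : ℝ => Real.exp (-(c*t))) atTop (nhds 0) :=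
      Real.tendsto_exp_neg_atTop_nhds_zero.comp h1
    simpa using h2.const_mul (W 0)
  -- squeeze lemma helper
  have hsq : ∀ (Y : ℝ → ℝ) (a : ℝ), 0 < a → (∀ t, a * (Y t)^2 ≤ W t) →
      Tendsto Y atTop (nhds 0) := by
    intro Y a ha hY
    have h1 : Tendsto (fun t => a * (Y t)^2) atTop (nhds 0) := by
      refine tendsto_of_tendsto_of_tendsto_of_le_of_le' tendsto_const_nhds hexp
        (Eventually.of_forall fun t => by positivity) ?_
      filter_upwards [eventually_ge_atTop (0:ℝ)] with t ht
      exact le_trans (hY t) (hbound t ht)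
    have h2 : Tendsto (fun t => (Y t)^2) atTop (nhds 0) := by
      have h3 := h1.const_mul (a⁻¹)
      simp only [mul_zero] at h3
      refine h3.congr fun t => ?_
      field_simp
    have h4 : Tendsto (fun t => |Y t|) atTop (nhds 0) := by
      have h5 := (Real.continuous_sqrt.tendsto 0).comp h2
      simpa [Function.comp_def, Real.sqrt_sq_eq_abs] using h5
    exact (tendsto_zero_iff_abs_tendsto_zero Y).2 h4
  constructor
  · exact hsq X (k/4) (by positivity) fun t => le_trans (by nlinarith [sq_nonneg (v t)]) (hWlb t)
  · exact hsq v (m/4) (by positivity) fun t => le_trans (by nlinarith [sq_nonneg (X t)]) (hWlb t)
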